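/- In the setting of Proposition zk, for each x ∈ S_⋆ and each sequence ℓ_N with ℓ_N → ∞ and ℓ_N/N → 0, lim_{N→∞} μ_N(η : η_x ≥ N − ℓ_N) = 1/κ_⋆, where μ_N is the zero-range stationary measure. -/

import Mathlib

open Finset Filter Topology

noncomputable def aZR (α : ℝ) (n : ℕ) : ℝ := if n = 0 then 1 else (n : ℝ) ^ α

def confs (S : Type*) [Fintype S] [DecidableEq S] (N : ℕ) : Finset (S → ℕ) :=
  (Fintype.piFinset fun _ => Finset.range (N + 1)).filter (fun η => ∑ x, η x = N)

namespace CondAux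
variable {S : Type*} [Fintype S] [DecidableEq S]

def confsOn (T : Finset S) (j : ℕ) : Finset (S → ℕ) :=
  (Fintype.piFinset fun y => if y ∈ T then Finset.range (j + 1) else {0}).filter
    (fun η => ∑ y, η y = j)

lemma mem_confs {N : ℕ} {η : S → ℕ} : η ∈ confs S N ↔ ∑ y, η y = N := by
  simp only [confs, Finset.mem_filter, Fintype.mem_piFinset, Finset.mem_range, Nat.lt_succ_iff]
  refine ⟨fun h => h.2, fun h => ⟨fun y => ?_, h⟩⟩
  exact h ▸ Finset.single_le_sum (fun i _ => Nat.zero_le _) (Finset.mem_univ y)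

lemma mem_confsOn {T : Finset S} {j : ℕ} {η : S → ℕ} :
    η ∈ confsOn T j ↔ (∀ y ∉ T, η y = 0) ∧ ∑ y, η y = j := by
  simp only [confsOn, Finset.mem_filter, Fintype.mem_piFinset]
  constructor
  · refine fun h => ⟨fun y hy => ?_, h.2⟩
    have := h.1 y; rw [if_neg hy] at this; simpa using this
  · rintro ⟨h0, hs⟩
    refine ⟨fun y => ?_, hs⟩
    by_cases hy : y ∈ T
    · rw [if_pos hy]
      simp only [Finset.mem_range, Nat.lt_succ_iff]
      exact hs ▸ Finset.single_le_sum (fun i _ => Nat.zero_le _) (Finset.mem_univ y)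
    · rw [if_neg hy]; simp [h0 y hy]

lemma sum_split (f : S → ℕ → ℝ) (hf0 : ∀ y, f y 0 = 1) (x : S) (N : ℕ)
    (P : ℕ → Prop) [DecidablePred P] :
    ∑ η ∈ (confs S N).filter (fun η => P (η x)), ∏ y, f y (η y)
      = ∑ k ∈ (Finset.range (N + 1)).filter P,
          f x k * ∑ ζ ∈ confsOn (Finset.univ.erase x) (N - k), ∏ y, f y (ζ y) := by
  have hmaps : ∀ η ∈ (confs S N).filter (fun η => P (η x)),
      (fun η : S → ℕ => η x) η ∈ (Finset.range (N + 1)).filter P := by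
    intro η hη
    rw [Finset.mem_filter] at hη
    have hN := mem_confs.mp hη.1
    simp only [Finset.mem_filter, Finset.mem_range, Nat.lt_succ_iff]
    exact ⟨hN ▸ Finset.single_le_sum (fun i _ => Nat.zero_le _) (Finset.mem_univ x), hη.2⟩
  rw [← Finset.sum_fiberwise_of_maps_to hmaps (fun η => ∏ y, f y (η y))]
  refine Finset.sum_congr rfl fun k hk => ?_
  obtain ⟨hkN, hPk⟩ := Finset.mem_filter.mp hk
  rw [Finset.mem_range, Nat.lt_succ_iff] at hkN
  rw [Finset.mul_sum]
  refine Finset.sum_nbij' (fun η => Function.update η x 0) (fun ζ => Function.update ζ x k)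
    ?_ ?_ ?_ ?_ ?_
  · intro η hη
    simp only [Finset.mem_filter] at hη
    obtain ⟨⟨hc, _⟩, hxk⟩ := hη
    have hN := mem_confs.mp hc
    rw [mem_confsOn]
    constructor
    · intro y hy
      rcases ((Finset.mem_erase.not.mp hy)) with h
      by_cases hyx : y = x
      · subst hyx; simp [Function.update_self]
      · exact absurd (Finset.mem_erase.mpr ⟨hyx, Finset.mem_univ y⟩) hy
    · rw [Finset.sum_update_of_mem (Finset.mem_univ x), Finset.sdiff_singleton_eq_erase]
      have h2 := Finset.add_sum_erase Finset.univ η (Finset.mem_univ x)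
      omega
  · intro ζ hζ
    rw [mem_confsOn] at hζ
    obtain ⟨h0, hs⟩ := hζ
    have hζx : ζ x = 0 := h0 x (by simp)
    simp only [Finset.mem_filter]
    refine ⟨⟨mem_confs.mpr ?_, by simp [Function.update_self, hPk]⟩,
      by simp [Function.update_self]⟩
    rw [Finset.sum_update_of_mem (Finset.mem_univ x), Finset.sdiff_singleton_eq_erase]
    have h2 := Finset.add_sum_erase Finset.univ ζ (Finset.mem_univ x)
    omega
  · intro η hη
    simp only [Finset.mem_filter] at hη
    simp only [Function.update_idem, ← hη.2, Function.update_eq_self]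
  · intro ζ hζ
    rw [mem_confsOn] at hζ
    have hζx : ζ x = 0 := hζ.1 x (by simp)
    simp only [Function.update_idem, ← hζx, Function.update_eq_self]
  · intro η hη
    simp only [Finset.mem_filter] at hη
    rw [← Finset.mul_prod_erase Finset.univ (fun y => f y (η y)) (Finset.mem_univ x),
      ← Finset.mul_prod_erase Finset.univ (fun y => f y (Function.update η x 0 y)) (Finset.mem_univ x),
      Function.update_self, hf0, hη.2]
    ring_nf
    congr 1
    refine Finset.prod_congr rfl fun y hy => ?_
    rw [Function.update_of_ne (Finset.mem_erase.mp hy).1]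

def G (f : S → ℕ → ℝ) (T : Finset S) (j : ℕ) : ℝ := ∑ ζ ∈ confsOn T j, ∏ y, f y (ζ y)

variable (f : S → ℕ → ℝ) (hf0 : ∀ y, f y 0 = 1) (hfnn : ∀ y n, 0 ≤ f y n)
  (hsum : ∀ y, Summable (f y)) (T : Finset S)

include hfnn in
lemma G_nonneg (j : ℕ) : 0 ≤ G f T j :=
  Finset.sum_nonneg fun ζ _ => Finset.prod_nonneg fun y _ => hfnn y (ζ y)

include hf0 in
lemma prod_partial_eq (M : ℕ) :
    ∏ y ∈ T, ∑ n ∈ Finset.range (M + 1), f y n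
      = ∑ η ∈ Fintype.piFinset (fun y => if y ∈ T then Finset.range (M + 1) else {0}),
          ∏ y, f y (η y) := by
  rw [← Finset.prod_univ_sum]
  have h : ∀ y, (∑ n ∈ (if y ∈ T then Finset.range (M + 1) else {0}), f y n)
      = if y ∈ T then ∑ n ∈ Finset.range (M + 1), f y n else 1 := by
    intro y; split <;> simp [hf0]
  calc ∏ y ∈ T, ∑ n ∈ Finset.range (M + 1), f y n
      = ∏ y ∈ Finset.univ ∩ T, ∑ n ∈ Finset.range (M + 1), f y n := by
        rw [Finset.univ_inter]
    _ = ∏ y, if y ∈ T then ∑ n ∈ Finset.range (M + 1), f y n else 1 := by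
        rw [Finset.prod_ite_mem]
    _ = ∏ y, ∑ n ∈ (if y ∈ T then Finset.range (M + 1) else {0}), f y n := by
        exact Finset.prod_congr rfl fun y _ => (h y).symm

lemma sum_range_G_eq (M : ℕ) :
    ∑ j ∈ Finset.range (M + 1), G f T j
      = ∑ η ∈ (Fintype.piFinset (fun y => if y ∈ T then Finset.range (M + 1) else {0})).filter
          (fun η => ∑ y, η y ≤ M), ∏ y, f y (η y) := by
  have hmaps : ∀ η ∈ (Fintype.piFinset (fun y => if y ∈ T then Finset.range (M + 1) else {0})).filter
      (fun η => ∑ y, η y ≤ M), (fun η : S → ℕ => ∑ y, η y) η ∈ Finset.range (M + 1) := by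
    intro η hη
    rw [Finset.mem_filter] at hη
    rw [Finset.mem_range, Nat.lt_succ_iff]
    exact hη.2
  rw [← Finset.sum_fiberwise_of_maps_to hmaps (fun η => ∏ y, f y (η y))]
  refine Finset.sum_congr rfl fun j hj => ?_
  rw [Finset.mem_range, Nat.lt_succ_iff] at hj
  refine Finset.sum_congr ?_ fun _ _ => rfl
  ext η
  simp only [Finset.mem_filter, Fintype.mem_piFinset, mem_confsOn]
  constructor
  · rintro ⟨h0, hs⟩
    have hle : ∀ y, η y ≤ j := fun y =>
      hs ▸ Finset.single_le_sum (fun i _ => Nat.zero_le _) (Finset.mem_univ y)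
    refine ⟨⟨fun y => ?_, by omega⟩, hs⟩
    by_cases hy : y ∈ T
    · rw [if_pos hy, Finset.mem_range]; have := hle y; omega
    · rw [if_neg hy]; simp [h0 y hy]
  · rintro ⟨⟨hc, _⟩, hs⟩
    refine ⟨fun y hy => ?_, hs⟩
    have := hc y; rw [if_neg hy] at this; simpa using this

include hfnn hf0 in
lemma sum_range_G_le (M : ℕ) :
    ∑ j ∈ Finset.range (M + 1), G f T j ≤ ∏ y ∈ T, ∑ n ∈ Finset.range (M + 1), f y n := by
  rw [sum_range_G_eq, prod_partial_eq f hf0]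
  exact Finset.sum_le_sum_of_subset_of_nonneg (Finset.filter_subset _ _)
    (fun η _ _ => Finset.prod_nonneg fun y _ => hfnn y (η y))

include hfnn hf0 in
lemma prod_partial_le_sum_G (M : ℕ) :
    ∏ y ∈ T, ∑ n ∈ Finset.range (M + 1), f y n
      ≤ ∑ j ∈ Finset.range (Fintype.card S * M + 1), G f T j := by
  rw [sum_range_G_eq, prod_partial_eq f hf0]
  refine Finset.sum_le_sum_of_subset_of_nonneg ?_
    (fun η _ _ => Finset.prod_nonneg fun y _ => hfnn y (η y))
  intro η hη
  rw [Fintype.mem_piFinset] at hη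
  have hle : ∀ y, η y ≤ M := by
    intro y
    have := hη y
    by_cases hy : y ∈ T
    · rw [if_pos hy, Finset.mem_range] at this; omega
    · rw [if_neg hy] at this; simp at this; omega
  have hsle : ∑ y, η y ≤ Fintype.card S * M := by
    calc ∑ y, η y ≤ ∑ _y : S, M := Finset.sum_le_sum fun y _ => hle y
      _ = Fintype.card S * M := by rw [Finset.sum_const, Finset.card_univ, smul_eq_mul]
  rw [Finset.mem_filter, Fintype.mem_piFinset]
  refine ⟨fun y => ?_, hsle⟩
  by_cases hy : y ∈ T
  · rw [if_pos hy, Finset.mem_range]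
    have h1 : η y ≤ ∑ y', η y' :=
      Finset.single_le_sum (fun i _ => Nat.zero_le _) (Finset.mem_univ y)
    omega
  · rw [if_neg hy]
    have := hη y; rwa [if_neg hy] at this

include hfnn hf0 hsum in
lemma G_sum_range_le_prod_tsum (M : ℕ) :
    ∑ j ∈ Finset.range M, G f T j ≤ ∏ y ∈ T, ∑' n, f y n := by
  calc ∑ j ∈ Finset.range M, G f T j ≤ ∑ j ∈ Finset.range (M + 1), G f T j := by
        refine Finset.sum_le_sum_of_subset_of_nonneg ?_ (fun j _ _ => G_nonneg f hfnn T j)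
        exact Finset.range_subset_range.mpr (Nat.le_succ M)
    _ ≤ ∏ y ∈ T, ∑ n ∈ Finset.range (M + 1), f y n := sum_range_G_le f hf0 hfnn T M
    _ ≤ ∏ y ∈ T, ∑' n, f y n := by
        refine Finset.prod_le_prod (fun y _ => Finset.sum_nonneg fun n _ => hfnn y n)
          (fun y _ => Summable.sum_le_tsum _ (fun n _ => hfnn y n) (hsum y))

include hfnn hf0 hsum in
lemma G_summable : Summable (G f T) :=
  summable_of_sum_range_le (fun j => G_nonneg f hfnn T j)
    (fun M => G_sum_range_le_prod_tsum f hf0 hfnn hsum T M)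

include hfnn hf0 hsum in
lemma G_tsum_eq : ∑' j, G f T j = ∏ y ∈ T, ∑' n, f y n := by
  refine le_antisymm (Summable.tsum_le_of_sum_range_le (G_summable f hf0 hfnn hsum T)
    (fun M => G_sum_range_le_prod_tsum f hf0 hfnn hsum T M)) ?_
  have htend : Tendsto (fun M => ∏ y ∈ T, ∑ n ∈ Finset.range (M + 1), f y n) atTop
      (𝓝 (∏ y ∈ T, ∑' n, f y n)) := by
    refine tendsto_finset_prod _ fun y _ => ?_
    have h1 := (hsum y).hasSum.tendsto_sum_nat
    exact h1.comp (tendsto_add_atTop_nat 1)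
  refine le_of_tendsto htend (Filter.Eventually.of_forall fun M => ?_)
  calc ∏ y ∈ T, ∑ n ∈ Finset.range (M + 1), f y n
      ≤ ∑ j ∈ Finset.range (Fintype.card S * M + 1), G f T j :=
        prod_partial_le_sum_G f hf0 hfnn T M
    _ ≤ ∑' j, G f T j := Summable.sum_le_tsum _ (fun j _ => G_nonneg f hfnn T j)
        (G_summable f hf0 hfnn hsum T)

include hfnn hf0 hsum in
lemma G_le_tsum (j : ℕ) : G f T j ≤ ∑' j, G f T j :=
  Summable.le_tsum (G_summable f hf0 hfnn hsum T) j (fun i _ => G_nonneg f hfnn T i)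


lemma sum_le_sum_of_cover {β ι : Type*} (I : Finset ι) (A : Finset β)
    (p : ι → β → Prop) [∀ i, DecidablePred (p i)] (g : β → ℝ)
    (hg : ∀ b ∈ A, 0 ≤ g b) (hcov : ∀ b ∈ A, ∃ i ∈ I, p i b) :
    ∑ b ∈ A, g b ≤ ∑ i ∈ I, ∑ b ∈ A.filter (p i), g b := by
  have h : ∀ i, ∑ b ∈ A.filter (p i), g b = ∑ b ∈ A, if p i b then g b else 0 :=
    fun i => Finset.sum_filter _ _
  simp only [h]
  rw [Finset.sum_comm]
  refine Finset.sum_le_sum fun b hb => ?_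
  obtain ⟨i0, hi0, hp⟩ := hcov b hb
  calc g b = if p i0 b then g b else 0 := by rw [if_pos hp]
    _ ≤ ∑ i ∈ I, if p i b then g b else 0 :=
      Finset.single_le_sum (f := fun i => if p i b then g b else 0)
        (fun i _ => by by_cases hpb : p i b <;> simp [hpb, hg b hb]) hi0

lemma star_limit (f : S → ℕ → ℝ) (hf0 : ∀ y, f y 0 = 1) (hfnn : ∀ y n, 0 ≤ f y n)
    (hsum : ∀ y, Summable (f y)) (α : ℝ) (hα : 0 < α)
    (x : S) (hfx : ∀ n, f x n = 1 / aZR α n)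
    (ℓ : ℕ → ℕ) (hℓ : Tendsto ℓ atTop atTop)
    (hℓN : Tendsto (fun N : ℕ => (ℓ N : ℝ) / N) atTop (𝓝 0))
    (hEv : ∀ᶠ N in atTop, 2 * ℓ N + 2 ≤ N) :
    Tendsto (fun N : ℕ => (N : ℝ) ^ α *
        ∑ η ∈ (confs S N).filter (fun η => N - ℓ N ≤ η x), ∏ y, f y (η y))
      atTop (𝓝 (∏ y ∈ Finset.univ.erase x, ∑' n, f y n)) := by
  set T := Finset.univ.erase x with hT
  set C := ∏ y ∈ T, ∑' n, f y n with hC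
  have hGtsum : ∑' j, G f T j = C := G_tsum_eq f hf0 hfnn hsum T
  have hPart : Tendsto (fun N => ∑ j ∈ Finset.range (ℓ N + 1), G f T j) atTop (𝓝 C) := by
    have h1 : Tendsto (fun M => ∑ j ∈ Finset.range M, G f T j) atTop (𝓝 C) := by
      rw [← hGtsum]
      exact (G_summable f hf0 hfnn hsum T).hasSum.tendsto_sum_nat
    exact h1.comp ((tendsto_add_atTop_nat 1).comp hℓ)
  -- the explicit form
  have hform : ∀ N : ℕ, 2 * ℓ N + 2 ≤ N →
      (N : ℝ) ^ α * ∑ η ∈ (confs S N).filter (fun η => N - ℓ N ≤ η x), ∏ y, f y (η y)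
        = ∑ j ∈ Finset.range (ℓ N + 1),
            ((N : ℝ) ^ α / ((N - j : ℕ) : ℝ) ^ α) * G f T j := by
    intro N hN
    rw [sum_split f hf0 x N (fun k => N - ℓ N ≤ k)]
    have hre : ∑ k ∈ (Finset.range (N + 1)).filter (fun k => N - ℓ N ≤ k),
        f x k * ∑ ζ ∈ confsOn T (N - k), ∏ y, f y (ζ y)
        = ∑ j ∈ Finset.range (ℓ N + 1), f x (N - j) * G f T j := by
      refine Finset.sum_nbij' (fun k => N - k) (fun j => N - j) ?_ ?_ ?_ ?_ ?_
      · intro k hk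
        simp only [Finset.mem_filter, Finset.mem_range] at hk ⊢
        omega
      · intro j hj
        simp only [Finset.mem_filter, Finset.mem_range] at hj ⊢
        omega
      · intro k hk
        simp only [Finset.mem_filter, Finset.mem_range] at hk
        omega
      · intro j hj
        simp only [Finset.mem_range] at hj
        omega
      · intro k hk
        simp only [Finset.mem_filter, Finset.mem_range] at hk
        have h1 : N - (N - k) = k := by omega
        rw [G, h1]
    rw [hre, Finset.mul_sum]
    refine Finset.sum_congr rfl fun j hj => ?_
    rw [Finset.mem_range] at hj
    have hj0 : N - j ≠ 0 := by omega
    rw [hfx (N - j), aZR, if_neg hj0]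
    ring
  -- upper comparison function
  set ρ : ℕ → ℝ := fun N => ((N : ℝ) / ((N - ℓ N : ℕ) : ℝ)) ^ α with hρ
  have hρ1 : Tendsto ρ atTop (𝓝 1) := by
    have hb : Tendsto (fun N : ℕ => (1 - (ℓ N : ℝ) / N)⁻¹) atTop (𝓝 1) := by
      have := ((tendsto_const_nhds (x := (1:ℝ))).sub hℓN).inv₀ (by norm_num)
      simpa using this
    have hbase : Tendsto (fun N : ℕ => (N : ℝ) / ((N - ℓ N : ℕ) : ℝ)) atTop (𝓝 1) := by
      refine hb.congr' ?_
      filter_upwards [hEv] with N hN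
      have hle : ℓ N ≤ N := by omega
      have hN0 : (N:ℝ) ≠ 0 := by
        have : (0:ℕ) < N := by omega
        exact_mod_cast this.ne'
      rw [Nat.cast_sub hle, one_sub_div hN0, inv_div]
    have := hbase.rpow_const (p := α) (Or.inr hα.le)
    simpa using this
  have hupper : Tendsto (fun N => ρ N * ∑ j ∈ Finset.range (ℓ N + 1), G f T j) atTop (𝓝 C) := by
    have := hρ1.mul hPart
    simpa using this
  refine tendsto_of_tendsto_of_tendsto_of_le_of_le' hPart hupper ?_ ?_
  · filter_upwards [hEv] with N hN
    rw [hform N hN]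
    refine Finset.sum_le_sum fun j hj => ?_
    rw [Finset.mem_range] at hj
    have h1 : (1:ℝ) ≤ (N:ℝ) ^ α / ((N - j : ℕ) : ℝ) ^ α := by
      have hnj : (0:ℝ) < ((N - j : ℕ) : ℝ) := by exact_mod_cast (by omega : 0 < N - j)
      have hpos : (0:ℝ) < ((N - j : ℕ) : ℝ) ^ α := Real.rpow_pos_of_pos hnj α
      rw [le_div_iff₀ hpos, one_mul]
      exact Real.rpow_le_rpow hnj.le (by exact_mod_cast (by omega : N - j ≤ N)) hα.le
    exact le_mul_of_one_le_left (G_nonneg f hfnn T j) h1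
  · filter_upwards [hEv] with N hN
    rw [hform N hN, Finset.mul_sum]
    refine Finset.sum_le_sum fun j hj => ?_
    rw [Finset.mem_range] at hj
    have hnl : (0:ℝ) < ((N - ℓ N : ℕ) : ℝ) := by exact_mod_cast (by omega : 0 < N - ℓ N)
    have hnj : (0:ℝ) < ((N - j : ℕ) : ℝ) := by exact_mod_cast (by omega : 0 < N - j)
    have hρeq : ρ N = (N : ℝ) ^ α / ((N - ℓ N : ℕ) : ℝ) ^ α := by
      simp only [hρ]
      exact Real.div_rpow (by positivity) hnl.le α
    refine mul_le_mul_of_nonneg_right ?_ (G_nonneg f hfnn T j)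
    rw [hρeq]
    refine div_le_div_of_nonneg_left (by positivity) (Real.rpow_pos_of_pos hnl α) ?_
    exact Real.rpow_le_rpow hnl.le (by exact_mod_cast (by omega : N - ℓ N ≤ N - j)) hα.le

lemma mid_vanish (f : S → ℕ → ℝ) (hf0 : ∀ y, f y 0 = 1) (hfnn : ∀ y n, 0 ≤ f y n)
    (hsum : ∀ y, Summable (f y)) (α : ℝ) (hα : 0 < α)
    (y : S) (hfy : ∀ n, f y n = 1 / aZR α n)
    (ℓ : ℕ → ℕ) (hℓ : Tendsto ℓ atTop atTop) (c : ℕ) :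
    Tendsto (fun N : ℕ => (N : ℝ) ^ α *
        ∑ η ∈ (confs S N).filter (fun η => N ≤ c * η y ∧ η y + ℓ N < N), ∏ z, f z (η z))
      atTop (𝓝 0) := by
  set T := Finset.univ.erase y with hT
  set tail : ℕ → ℝ := fun N => (∑' j, G f T j) - ∑ j ∈ Finset.range (ℓ N + 1), G f T j
    with htail
  have htail0 : Tendsto tail atTop (𝓝 0) := by
    have h1 : Tendsto (fun M => ∑ j ∈ Finset.range M, G f T j) atTop (𝓝 (∑' j, G f T j)) :=
      (G_summable f hf0 hfnn hsum T).hasSum.tendsto_sum_nat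
    have h2 := h1.comp ((tendsto_add_atTop_nat 1).comp hℓ)
    have h3 := (tendsto_const_nhds (x := ∑' j, G f T j)).sub h2
    simpa using h3
  have hc0 : Tendsto (fun N => (c : ℝ) ^ α * tail N) atTop (𝓝 0) := by
    simpa using tendsto_const_nhds.mul htail0
  refine squeeze_zero' ?_ ?_ hc0
  · refine Eventually.of_forall fun N => ?_
    refine mul_nonneg (Real.rpow_nonneg (Nat.cast_nonneg N) α) ?_
    exact Finset.sum_nonneg fun η _ => Finset.prod_nonneg fun z _ => hfnn z (η z)
  · refine Eventually.of_forall fun N => ?_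
    rw [sum_split f hf0 y N (fun k => N ≤ c * k ∧ k + ℓ N < N), Finset.mul_sum]
    have htailnn : ∑ j ∈ Finset.range (ℓ N + 1), G f T j ≤ ∑' j, G f T j :=
      Summable.sum_le_tsum _ (fun j _ => G_nonneg f hfnn T j) (G_summable f hf0 hfnn hsum T)
    calc ∑ k ∈ (Finset.range (N + 1)).filter (fun k => N ≤ c * k ∧ k + ℓ N < N),
            (N : ℝ) ^ α * (f y k * ∑ ζ ∈ confsOn T (N - k), ∏ z, f z (ζ z))
        ≤ ∑ k ∈ (Finset.range (N + 1)).filter (fun k => N ≤ c * k ∧ k + ℓ N < N),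
            (c : ℝ) ^ α * G f T (N - k) := by
          refine Finset.sum_le_sum fun k hk => ?_
          simp only [Finset.mem_filter, Finset.mem_range] at hk
          obtain ⟨hkN, hck, hkl⟩ := hk
          have hk1 : 1 ≤ k := by
            rcases Nat.eq_zero_or_pos k with h | h
            · subst h; omega
            · exact h
          have hkpos : (0 : ℝ) < (k : ℝ) := by exact_mod_cast hk1
          have hkrpos : (0 : ℝ) < (k : ℝ) ^ α := Real.rpow_pos_of_pos hkpos α
          have hfyk : f y k = 1 / (k : ℝ) ^ α := by
            rw [hfy k, aZR, if_neg (by omega : k ≠ 0)]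
          have hineq : (N : ℝ) ^ α ≤ (c : ℝ) ^ α * (k : ℝ) ^ α := by
            rw [← Real.mul_rpow (Nat.cast_nonneg c) (Nat.cast_nonneg k)]
            refine Real.rpow_le_rpow (Nat.cast_nonneg N) ?_ hα.le
            exact_mod_cast hck
          have h1 : (N : ℝ) ^ α * (f y k * G f T (N - k)) = ((N : ℝ) ^ α / (k : ℝ) ^ α) * G f T (N - k) := by
            rw [hfyk]; ring
          rw [show (∑ ζ ∈ confsOn T (N - k), ∏ z, f z (ζ z)) = G f T (N - k) from rfl, h1]
          refine mul_le_mul_of_nonneg_right ?_ (G_nonneg f hfnn T (N - k))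
          rw [div_le_iff₀ hkrpos]
          exact hineq
      _ = (c : ℝ) ^ α * ∑ k ∈ (Finset.range (N + 1)).filter (fun k => N ≤ c * k ∧ k + ℓ N < N),
            G f T (N - k) := by rw [Finset.mul_sum]
      _ ≤ (c : ℝ) ^ α * tail N := by
          refine mul_le_mul_of_nonneg_left ?_ (Real.rpow_nonneg (Nat.cast_nonneg c) α)
          set Pset := (Finset.range (N + 1)).filter (fun k => N ≤ c * k ∧ k + ℓ N < N) with hPset
          rcases Pset.eq_empty_or_nonempty with h | h
          · rw [h, Finset.sum_empty, htail]
            simp only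
            linarith
          · obtain ⟨k0, hk0⟩ := h
            have hk0' : k0 + ℓ N < N := by
              rw [hPset, Finset.mem_filter] at hk0; exact hk0.2.2
            have hlN : ℓ N < N := by omega
            have himg : ∑ k ∈ Pset, G f T (N - k)
                = ∑ j ∈ Pset.image (fun k => N - k), G f T j := by
              rw [Finset.sum_image]
              intro k1 h1 k2 h2 heq
              simp only [hPset, Finset.coe_filter, Finset.mem_coe, Finset.mem_filter, Finset.mem_range, Set.mem_setOf_eq] at h1 h2 heq
              omega
            rw [himg]
            calc ∑ j ∈ Pset.image (fun k => N - k), G f T j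
                ≤ ∑ j ∈ Finset.Ico (ℓ N + 1) (N + 1), G f T j := by
                  refine Finset.sum_le_sum_of_subset_of_nonneg ?_
                    (fun j _ _ => G_nonneg f hfnn T j)
                  intro j hj
                  rw [Finset.mem_image] at hj
                  obtain ⟨k, hk, rfl⟩ := hj
                  rw [hPset, Finset.mem_filter, Finset.mem_range] at hk
                  rw [Finset.mem_Ico]
                  omega
              _ = ∑ j ∈ Finset.range (N + 1), G f T j
                    - ∑ j ∈ Finset.range (ℓ N + 1), G f T j := by
                  rw [Finset.sum_Ico_eq_sub _ (by omega : ℓ N + 1 ≤ N + 1)]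
              _ ≤ tail N := by
                  rw [htail]
                  simp only
                  have := Summable.sum_le_tsum (Finset.range (N + 1))
                    (fun j _ => G_nonneg f hfnn T j) (G_summable f hf0 hfnn hsum T)
                  linarith

lemma geo_vanish (f : S → ℕ → ℝ) (hf0 : ∀ y, f y 0 = 1) (hfnn : ∀ y n, 0 ≤ f y n)
    (hsum : ∀ y, Summable (f y)) (α : ℝ) (hα : 0 < α)
    (y : S) (q : ℝ) (hq0 : 0 < q) (hq1 : q < 1) (hfq : ∀ n, f y n ≤ q ^ n)
    (c : ℕ) (hc : 0 < c) :
    Tendsto (fun N : ℕ => (N : ℝ) ^ α *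
        ∑ η ∈ (confs S N).filter (fun η => N ≤ c * η y), ∏ z, f z (η z))
      atTop (𝓝 0) := by
  set T := Finset.univ.erase y with hT
  set Ct := ∑' j, G f T j with hCt
  have hCtnn : 0 ≤ Ct := tsum_nonneg fun j => G_nonneg f hfnn T j
  set r := q ^ ((1 : ℝ) / c) with hr
  have hr0 : 0 < r := Real.rpow_pos_of_pos hq0 _
  have hr1 : r < 1 := Real.rpow_lt_one hq0.le hq1 (by positivity)
  set K := ⌈α⌉₊ + 2 with hK
  have hmaj : Tendsto (fun N : ℕ => ((N : ℝ) ^ K * r ^ N) * Ct) atTop (𝓝 0) := by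
    have h1 := (summable_pow_mul_geometric_of_norm_lt_one (R := ℝ) K (r := r)
      (by rw [Real.norm_eq_abs, abs_of_pos hr0]; exact hr1)).tendsto_atTop_zero
    simpa using h1.mul_const Ct
  refine squeeze_zero' ?_ ?_ hmaj
  · refine Eventually.of_forall fun N => ?_
    refine mul_nonneg (Real.rpow_nonneg (Nat.cast_nonneg N) α) ?_
    exact Finset.sum_nonneg fun η _ => Finset.prod_nonneg fun z _ => hfnn z (η z)
  · filter_upwards [eventually_ge_atTop 2] with N hN2
    rw [sum_split f hf0 y N (fun k => N ≤ c * k), Finset.mul_sum]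
    have hrN : ∀ k : ℕ, N ≤ c * k → f y k ≤ r ^ N := by
      intro k hck
      have h1 : f y k ≤ q ^ k := hfq k
      have h2 : q ^ k = q ^ (k : ℝ) := (Real.rpow_natCast q k).symm
      have h3 : (N : ℝ) / c ≤ k := by
        rw [div_le_iff₀ (by exact_mod_cast hc : (0:ℝ) < (c:ℝ))]
        calc (N : ℝ) ≤ ((c * k : ℕ) : ℝ) := by exact_mod_cast hck
          _ = (k : ℝ) * c := by push_cast; ring
      have h4 : q ^ (k : ℝ) ≤ q ^ ((N : ℝ) / c) :=
        Real.rpow_le_rpow_of_exponent_ge hq0 hq1.le h3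
      have h5 : q ^ ((N : ℝ) / c) = r ^ N := by
        rw [hr, ← Real.rpow_natCast (q ^ ((1:ℝ)/c)) N, ← Real.rpow_mul hq0.le]
        congr 1
        ring
      linarith [h1, h2 ▸ h1]
    calc ∑ k ∈ (Finset.range (N + 1)).filter (fun k => N ≤ c * k),
            (N : ℝ) ^ α * (f y k * ∑ ζ ∈ confsOn T (N - k), ∏ z, f z (ζ z))
        ≤ ∑ _k ∈ (Finset.range (N + 1)).filter (fun k => N ≤ c * k),
            (N : ℝ) ^ α * (r ^ N * Ct) := by
          refine Finset.sum_le_sum fun k hk => ?_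
          simp only [Finset.mem_filter, Finset.mem_range] at hk
          refine mul_le_mul_of_nonneg_left ?_ (Real.rpow_nonneg (Nat.cast_nonneg N) α)
          have hG : (∑ ζ ∈ confsOn T (N - k), ∏ z, f z (ζ z)) = G f T (N - k) := rfl
          rw [hG]
          refine mul_le_mul (hrN k hk.2) (G_le_tsum f hf0 hfnn hsum T (N - k))
            (G_nonneg f hfnn T (N - k)) (pow_nonneg hr0.le N)
      _ ≤ ((N : ℝ) + 1) * ((N : ℝ) ^ α * (r ^ N * Ct)) := by
          rw [Finset.sum_const, nsmul_eq_mul]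
          refine mul_le_mul_of_nonneg_right ?_ (by positivity)
          calc (((Finset.range (N + 1)).filter (fun k => N ≤ c * k)).card : ℝ)
              ≤ ((Finset.range (N + 1)).card : ℝ) := by
                exact_mod_cast Finset.card_filter_le _ _
            _ = (N : ℝ) + 1 := by rw [Finset.card_range]; push_cast; ring
      _ ≤ ((N : ℝ) ^ K * r ^ N) * Ct := by
          have hN1 : (1 : ℝ) ≤ (N : ℝ) := by exact_mod_cast (by omega : 1 ≤ N)
          have hNR : (2 : ℝ) ≤ (N : ℝ) := by exact_mod_cast hN2
          have h1 : ((N : ℝ) + 1) * (N : ℝ) ^ α ≤ (N : ℝ) ^ K := by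
            have ha : (N : ℝ) + 1 ≤ (N : ℝ) ^ (2 : ℕ) := by nlinarith
            have hb : (N : ℝ) ^ α ≤ (N : ℝ) ^ (⌈α⌉₊ : ℕ) := by
              rw [← Real.rpow_natCast (N : ℝ) ⌈α⌉₊]
              exact Real.rpow_le_rpow_of_exponent_le hN1 (Nat.le_ceil α)
            calc ((N : ℝ) + 1) * (N : ℝ) ^ α ≤ (N : ℝ) ^ (2 : ℕ) * (N : ℝ) ^ (⌈α⌉₊ : ℕ) := by
                  refine mul_le_mul ha hb (Real.rpow_nonneg (Nat.cast_nonneg N) α) (by positivity)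
              _ = (N : ℝ) ^ K := by rw [← pow_add, hK]; ring_nf
          calc ((N : ℝ) + 1) * ((N : ℝ) ^ α * (r ^ N * Ct))
              = (((N : ℝ) + 1) * (N : ℝ) ^ α) * (r ^ N * Ct) := by ring
            _ ≤ (N : ℝ) ^ K * (r ^ N * Ct) := by
                refine mul_le_mul_of_nonneg_right h1 (by positivity)
            _ = ((N : ℝ) ^ K * r ^ N) * Ct := by ring

end CondAux

set_option maxHeartbeats 2000000 in
open Finset Filter Topology CondAux in
theorem condensation_probability_limit (S : Type*) [Fintype S] [DecidableEq S]
    (hκ : 2 ≤ Fintype.card S) (α : ℝ) (hα : 1 < α)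
    (m : S → ℝ) (hm : ∀ x, 0 < m x) (hm1 : ∑ x, m x = 1)
    (Mstar : ℝ) (hMstar : IsGreatest (Set.range m) Mstar)
    (Sstar : Finset S) (hSstar : Sstar = Finset.univ.filter (fun x => m x = Mstar))
    (κstar : ℕ) (hκstar : κstar = Sstar.card)
    (mstar : S → ℝ) (hmstar : ∀ x, mstar x = m x / Mstar)
    (Z : ℕ → ℝ) (hZ : ∀ N, Z N = (N : ℝ) ^ α *
      ∑ η ∈ confs S N, ∏ x, mstar x ^ η x / aZR α (η x))
    (μ : ℕ → (S → ℕ) → ℝ)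
    (hμ : ∀ N η, μ N η = (N : ℝ) ^ α / Z N * ∏ x, mstar x ^ η x / aZR α (η x))
    (ℓ : ℕ → ℕ) (hℓ : Filter.Tendsto ℓ Filter.atTop Filter.atTop)
    (hℓN : Filter.Tendsto (fun N : ℕ => (ℓ N : ℝ) / (N : ℝ)) Filter.atTop (nhds 0))
    (x : S) (hx : x ∈ Sstar) :
    Filter.Tendsto
      (fun N => ∑ η ∈ (confs S N).filter (fun η => N - ℓ N ≤ η x), μ N η)
      Filter.atTop (nhds (1 / (κstar : ℝ))) := by
  classical
  haveI : Nonempty S := Fintype.card_pos_iff.mp (by omega)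
  obtain ⟨x0, hx0⟩ := hMstar.1
  have hMpos : 0 < Mstar := hx0 ▸ hm x0
  have hmsub : ∀ y, 0 < mstar y := fun y => by rw [hmstar]; exact div_pos (hm y) hMpos
  have hmsle : ∀ y, mstar y ≤ 1 := fun y => by
    rw [hmstar]; exact (div_le_one hMpos).mpr (hMstar.2 ⟨y, rfl⟩)
  set f : S → ℕ → ℝ := fun y n => mstar y ^ n / aZR α n with hfdef
  have haZR1 : ∀ n : ℕ, 1 ≤ aZR α n := by
    intro n; rw [aZR]; split
    · exact le_rfl
    · rename_i h
      have h1 : (1 : ℝ) ≤ (n : ℝ) := by exact_mod_cast Nat.one_le_iff_ne_zero.mpr h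
      exact Real.one_le_rpow h1 (by linarith)
  have haZRpos : ∀ n, 0 < aZR α n := fun n => lt_of_lt_of_le one_pos (haZR1 n)
  have hf0 : ∀ y, f y 0 = 1 := fun y => by simp [hfdef, aZR]
  have hfpos : ∀ y n, 0 < f y n := fun y n => div_pos (pow_pos (hmsub y) n) (haZRpos n)
  have hfnn : ∀ y n, 0 ≤ f y n := fun y n => (hfpos y n).le
  have hsumbase : Summable (fun n : ℕ => 1 / aZR α n) := by
    have h1 : Summable (fun n : ℕ => 1 / (n : ℝ) ^ α) := Real.summable_one_div_nat_rpow.mpr hα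
    have h2 : Summable (fun n : ℕ => 1 / ((n + 1 : ℕ) : ℝ) ^ α) := (summable_nat_add_iff 1).mpr h1
    have h3 : Summable (fun n : ℕ => 1 / aZR α (n + 1)) := by
      refine h2.congr fun n => ?_
      simp [aZR]
    exact (summable_nat_add_iff 1).mp h3
  have hsum : ∀ y, Summable (f y) := by
    intro y
    refine Summable.of_nonneg_of_le (fun n => hfnn y n) (fun n => ?_) hsumbase
    have h1 : mstar y ^ n ≤ 1 := pow_le_one₀ (hmsub y).le (hmsle y)
    have h2 : 0 < aZR α (n) := haZRpos n
    exact div_le_div_of_nonneg_right h1 h2.le |>.trans_eq rfl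
  have hSsub : ∀ x' ∈ Sstar, mstar x' = 1 := by
    intro x' hx'
    rw [hSstar, Finset.mem_filter] at hx'
    rw [hmstar, hx'.2, div_self hMpos.ne']
  have hfx : ∀ x' ∈ Sstar, ∀ n, f x' n = 1 / aZR α n := by
    intro x' hx' n
    show mstar x' ^ n / aZR α n = 1 / aZR α n
    rw [hSsub x' hx', one_pow]
  set t : S → ℝ := fun y => ∑' n, f y n with htdef
  have ht1 : ∀ y, 1 ≤ t y := by
    intro y
    have h := Summable.le_tsum (hsum y) 0 (fun i _ => hfnn y i)
    rwa [hf0 y] at h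
  have htpos : ∀ y, 0 < t y := fun y => lt_of_lt_of_le one_pos (ht1 y)
  have htstar : ∀ x' ∈ Sstar, t x' = t x := by
    intro x' hx'
    show ∑' n, f x' n = ∑' n, f x n
    exact tsum_congr fun n => by rw [hfx x' hx' n, hfx x hx n]
  set C := ∏ y ∈ Finset.univ.erase x, t y with hCdef
  have hCpos : 0 < C := Finset.prod_pos fun y _ => htpos y
  have hCx' : ∀ x' ∈ Sstar, (∏ y ∈ Finset.univ.erase x', t y) = C := by
    intro x' hx'
    have h1 : t x' * ∏ y ∈ Finset.univ.erase x', t y = ∏ y, t y :=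
      Finset.mul_prod_erase _ _ (Finset.mem_univ x')
    have h2 : t x * C = ∏ y, t y := Finset.mul_prod_erase _ _ (Finset.mem_univ x)
    rw [htstar x' hx'] at h1
    rw [← h2] at h1
    exact mul_left_cancel₀ (htpos x).ne' h1
  have hEv : ∀ᶠ N in atTop, 2 * ℓ N + 2 ≤ N := by
    have h1 : ∀ᶠ N in atTop, (ℓ N : ℝ) / N < 1 / 4 :=
      hℓN.eventually (gt_mem_nhds (by norm_num))
    filter_upwards [h1, eventually_ge_atTop 4] with N h4 hN4
    have hNpos : (0 : ℝ) < N := by exact_mod_cast (by omega : 0 < N)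
    rw [div_lt_iff₀ hNpos] at h4
    have h5 : ((4 * ℓ N : ℕ) : ℝ) < N := by push_cast; linarith
    have h6 : 4 * ℓ N < N := by exact_mod_cast h5
    omega
  have hA : ∀ x' ∈ Sstar, Tendsto (fun N : ℕ => (N : ℝ) ^ α *
      ∑ η ∈ (confs S N).filter (fun η => N - ℓ N ≤ η x'), ∏ y, f y (η y)) atTop (𝓝 C) := by
    intro x' hx'
    have h := star_limit f hf0 hfnn hsum α (by linarith) x' (hfx x' hx') ℓ hℓ hℓN hEv
    rwa [hCx' x' hx'] at h
  have hAsum : Tendsto (fun N : ℕ => ∑ x' ∈ Sstar, (N : ℝ) ^ α *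
      ∑ η ∈ (confs S N).filter (fun η => N - ℓ N ≤ η x'), ∏ y, f y (η y)) atTop
      (𝓝 ((κstar : ℝ) * C)) := by
    have h1 := tendsto_finset_sum Sstar (fun x' hx' => hA x' hx')
    have h2 : ∑ _x' ∈ Sstar, C = (κstar : ℝ) * C := by
      rw [Finset.sum_const, nsmul_eq_mul, hκstar]
    rwa [h2] at h1
  set κ := Fintype.card S with hκdef
  have hD : ∀ y : S, Tendsto (fun N : ℕ => (N : ℝ) ^ α *
      ∑ η ∈ (confs S N).filter (fun η => N ≤ κ * η y ∧ (y ∈ Sstar → η y + ℓ N < N)),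
        ∏ z, f z (η z)) atTop (𝓝 0) := by
    intro y
    by_cases hy : y ∈ Sstar
    · have heq : ∀ N : ℕ,
          (confs S N).filter (fun η => N ≤ κ * η y ∧ (y ∈ Sstar → η y + ℓ N < N))
            = (confs S N).filter (fun η => N ≤ κ * η y ∧ η y + ℓ N < N) := by
        intro N
        refine Finset.filter_congr fun η _ => ?_
        simp [hy]
      simp only [heq]
      exact mid_vanish f hf0 hfnn hsum α (by linarith) y (hfx y hy) ℓ hℓ κ
    · have heq : ∀ N : ℕ,
          (confs S N).filter (fun η => N ≤ κ * η y ∧ (y ∈ Sstar → η y + ℓ N < N))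
            = (confs S N).filter (fun η => N ≤ κ * η y) := by
        intro N
        refine Finset.filter_congr fun η _ => ?_
        simp [hy]
      simp only [heq]
      have hq1 : mstar y < 1 := by
        rw [hmstar, div_lt_one hMpos]
        rcases lt_or_eq_of_le (hMstar.2 ⟨y, rfl⟩) with h | h
        · exact h
        · exfalso; apply hy; rw [hSstar]; simp [h]
      have hfq : ∀ n, f y n ≤ mstar y ^ n := by
        intro n
        show mstar y ^ n / aZR α n ≤ mstar y ^ n
        exact div_le_self (pow_nonneg (hmsub y).le n) (haZR1 n)
      exact geo_vanish f hf0 hfnn hsum α (by linarith) y (mstar y) (hmsub y) hq1 hfq κ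
        (by omega)
  set F : ℕ → ℝ := fun N => ∑ η ∈ confs S N, ∏ y, f y (η y) with hFdef
  have hgnn : ∀ η : S → ℕ, 0 ≤ ∏ y, f y (η y) :=
    fun η => Finset.prod_nonneg fun y _ => hfnn y (η y)
  have hFpos : ∀ N, 0 < F N := by
    intro N
    refine Finset.sum_pos' (fun η _ => hgnn η) ?_
    refine ⟨fun y => if y = x then N else 0, ?_, Finset.prod_pos fun y _ => hfpos y _⟩
    rw [mem_confs]
    simp
  have hFub : ∀ N : ℕ, F N ≤
      (∑ x' ∈ Sstar, ∑ η ∈ (confs S N).filter (fun η => N - ℓ N ≤ η x'), ∏ y, f y (η y))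
      + ∑ y : S, ∑ η ∈ (confs S N).filter
          (fun η => N ≤ κ * η y ∧ (y ∈ Sstar → η y + ℓ N < N)), ∏ z, f z (η z) := by
    intro N
    have hsplit : F N
        = (∑ η ∈ (confs S N).filter (fun η => ∀ x' ∈ Sstar, η x' + ℓ N < N), ∏ y, f y (η y))
        + ∑ η ∈ (confs S N).filter (fun η => ¬ ∀ x' ∈ Sstar, η x' + ℓ N < N),
            ∏ y, f y (η y) :=
      (Finset.sum_filter_add_sum_filter_not _ _ _).symm
    have hpart1 : ∑ η ∈ (confs S N).filter (fun η => ¬ ∀ x' ∈ Sstar, η x' + ℓ N < N),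
          ∏ y, f y (η y)
        ≤ ∑ x' ∈ Sstar, ∑ η ∈ (confs S N).filter (fun η => N - ℓ N ≤ η x'),
            ∏ y, f y (η y) := by
      have hcov := sum_le_sum_of_cover Sstar
        ((confs S N).filter (fun η => ¬ ∀ x' ∈ Sstar, η x' + ℓ N < N))
        (fun x' η => N - ℓ N ≤ η x') (fun η => ∏ y, f y (η y)) (fun b _ => hgnn b) ?_
      · refine le_trans hcov (Finset.sum_le_sum fun x' _ => ?_)
        refine Finset.sum_le_sum_of_subset_of_nonneg ?_ (fun b _ _ => hgnn b)
        intro η hη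
        simp only [Finset.mem_filter] at hη ⊢
        exact ⟨hη.1.1, hη.2⟩
      · intro η hη
        rw [Finset.mem_filter] at hη
        have h2 := hη.2
        push_neg at h2
        obtain ⟨x', hx', hlt⟩ := h2
        exact ⟨x', hx', by omega⟩
    have hpart2 : ∑ η ∈ (confs S N).filter (fun η => ∀ x' ∈ Sstar, η x' + ℓ N < N),
          ∏ y, f y (η y)
        ≤ ∑ y : S, ∑ η ∈ (confs S N).filter
            (fun η => N ≤ κ * η y ∧ (y ∈ Sstar → η y + ℓ N < N)), ∏ z, f z (η z) := by
      have hcov := sum_le_sum_of_cover Finset.univ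
        ((confs S N).filter (fun η => ∀ x' ∈ Sstar, η x' + ℓ N < N))
        (fun y η => N ≤ κ * η y) (fun η => ∏ y, f y (η y)) (fun b _ => hgnn b) ?_
      · refine le_trans hcov (Finset.sum_le_sum fun y _ => ?_)
        refine Finset.sum_le_sum_of_subset_of_nonneg ?_ (fun b _ _ => hgnn b)
        intro η hη
        simp only [Finset.mem_filter] at hη ⊢
        exact ⟨hη.1.1, hη.2, fun hy => hη.1.2 y hy⟩
      · intro η hη
        rw [Finset.mem_filter] at hη
        have hNsum := mem_confs.mp hη.1
        by_contra hcon
        push_neg at hcon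
        have hne : (Finset.univ : Finset S).Nonempty := Finset.univ_nonempty
        have hlt := Finset.sum_lt_sum_of_nonempty hne
          (f := fun y => κ * η y) (g := fun _ => N)
          (fun y _ => by
            have h := hcon y (Finset.mem_univ y)
            omega)
        rw [← Finset.mul_sum, hNsum, Finset.sum_const, Finset.card_univ, smul_eq_mul,
          ← hκdef] at hlt
        omega
    linarith
  have hFlb : ∀ᶠ N in atTop,
      (∑ x' ∈ Sstar, ∑ η ∈ (confs S N).filter (fun η => N - ℓ N ≤ η x'), ∏ y, f y (η y))
        ≤ F N := by
    filter_upwards [hEv] with N hN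
    have hdisj : ∀ x1 ∈ Sstar, ∀ x2 ∈ Sstar, x1 ≠ x2 →
        Disjoint ((confs S N).filter (fun η => N - ℓ N ≤ η x1))
          ((confs S N).filter (fun η => N - ℓ N ≤ η x2)) := by
      intro x1 _ x2 _ h12
      rw [Finset.disjoint_left]
      intro η hη1 hη2
      simp only [Finset.mem_filter] at hη1 hη2
      have hs := mem_confs.mp hη1.1
      have hpair : η x1 + η x2 ≤ N := by
        have h := Finset.sum_le_sum_of_subset
          (Finset.subset_univ ({x1, x2} : Finset S)) (f := η)
        rw [Finset.sum_pair h12] at h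
        omega
      omega
    have hbu : ∑ x' ∈ Sstar, ∑ η ∈ (confs S N).filter (fun η => N - ℓ N ≤ η x'),
          ∏ y, f y (η y)
        = ∑ η ∈ Sstar.biUnion (fun x' => (confs S N).filter (fun η => N - ℓ N ≤ η x')),
            ∏ y, f y (η y) :=
      (Finset.sum_biUnion hdisj).symm
    rw [hbu]
    refine Finset.sum_le_sum_of_subset_of_nonneg ?_ (fun b _ _ => hgnn b)
    exact Finset.biUnion_subset.mpr fun x' _ => Finset.filter_subset _ _
  have hFlim : Tendsto (fun N : ℕ => (N : ℝ) ^ α * F N) atTop (𝓝 ((κstar : ℝ) * C)) := by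
    have hDsum0 : Tendsto (fun N : ℕ => ∑ y : S, (N : ℝ) ^ α *
        ∑ η ∈ (confs S N).filter (fun η => N ≤ κ * η y ∧ (y ∈ Sstar → η y + ℓ N < N)),
          ∏ z, f z (η z)) atTop (𝓝 0) := by
      have h1 := tendsto_finset_sum Finset.univ (fun y (_ : y ∈ Finset.univ) => hD y)
      simpa using h1
    have hup := hAsum.add hDsum0
    rw [add_zero] at hup
    refine tendsto_of_tendsto_of_tendsto_of_le_of_le' hAsum hup ?_ ?_
    · filter_upwards [hFlb] with N hN
      have h1 : (0 : ℝ) ≤ (N : ℝ) ^ α := Real.rpow_nonneg (Nat.cast_nonneg N) α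
      calc ∑ x' ∈ Sstar, (N : ℝ) ^ α *
            ∑ η ∈ (confs S N).filter (fun η => N - ℓ N ≤ η x'), ∏ y, f y (η y)
          = (N : ℝ) ^ α * ∑ x' ∈ Sstar,
            ∑ η ∈ (confs S N).filter (fun η => N - ℓ N ≤ η x'), ∏ y, f y (η y) := by
            rw [Finset.mul_sum]
        _ ≤ (N : ℝ) ^ α * F N := mul_le_mul_of_nonneg_left hN h1
    · refine Eventually.of_forall fun N => ?_
      have h1 : (0 : ℝ) ≤ (N : ℝ) ^ α := Real.rpow_nonneg (Nat.cast_nonneg N) α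
      calc (N : ℝ) ^ α * F N
          ≤ (N : ℝ) ^ α *
            ((∑ x' ∈ Sstar, ∑ η ∈ (confs S N).filter (fun η => N - ℓ N ≤ η x'),
              ∏ y, f y (η y))
            + ∑ y : S, ∑ η ∈ (confs S N).filter
                (fun η => N ≤ κ * η y ∧ (y ∈ Sstar → η y + ℓ N < N)), ∏ z, f z (η z)) :=
            mul_le_mul_of_nonneg_left (hFub N) h1
        _ = (∑ x' ∈ Sstar, (N : ℝ) ^ α *
              ∑ η ∈ (confs S N).filter (fun η => N - ℓ N ≤ η x'), ∏ y, f y (η y))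
            + ∑ y : S, (N : ℝ) ^ α *
              ∑ η ∈ (confs S N).filter
                (fun η => N ≤ κ * η y ∧ (y ∈ Sstar → η y + ℓ N < N)), ∏ z, f z (η z) := by
            rw [mul_add, Finset.mul_sum, Finset.mul_sum]
  have hκpos : 0 < κstar := by
    rw [hκstar]
    exact Finset.card_pos.mpr ⟨x, hx⟩
  have hκR : (0 : ℝ) < (κstar : ℝ) := by exact_mod_cast hκpos
  have hlimquot : Tendsto (fun N : ℕ =>
      ((N : ℝ) ^ α * ∑ η ∈ (confs S N).filter (fun η => N - ℓ N ≤ η x), ∏ y, f y (η y))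
        / ((N : ℝ) ^ α * F N)) atTop (𝓝 (C / ((κstar : ℝ) * C))) :=
    (hA x hx).div hFlim (by positivity)
  have hval : C / ((κstar : ℝ) * C) = 1 / (κstar : ℝ) := by
    rw [div_eq_div_iff (by positivity) (by positivity)]
    ring
  rw [hval] at hlimquot
  refine hlimquot.congr' ?_
  filter_upwards [eventually_ge_atTop 1] with N hN1
  have hNpow : (0 : ℝ) < (N : ℝ) ^ α :=
    Real.rpow_pos_of_pos (by exact_mod_cast (by omega : 0 < N)) α
  have hprodeq : ∀ η : S → ℕ,
      (∏ x' : S, mstar x' ^ η x' / aZR α (η x')) = ∏ y, f y (η y) := fun η => rfl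
  have hμs : ∑ η ∈ (confs S N).filter (fun η => N - ℓ N ≤ η x), μ N η
      = (N : ℝ) ^ α / Z N *
        ∑ η ∈ (confs S N).filter (fun η => N - ℓ N ≤ η x), ∏ y, f y (η y) := by
    rw [Finset.mul_sum]
    refine Finset.sum_congr rfl fun η _ => ?_
    rw [hμ N η, hprodeq η]
  have hZN : Z N = (N : ℝ) ^ α * F N := by
    rw [hZ N, hFdef]
  rw [hμs, hZN]
  all_goals rw [div_mul_eq_mul_div]
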